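/- Let $C^*$ be a cochain complex of complete $A_R$-modules whose cohomology groups are finitely generated over $A_R = \mathbb{C}[u,t][[q]]/(ut-q)$ in each degree, such that $t-1$ acts injectively on each $C^i$, and such that $C^*$ carries a homotopy connection (a pre-connection along $t\partial_t - u\partial_u$ commuting with the differential). Then for each $i$, $H^i(C^*/(t-1)C^*) \cong H^i(C^*)/(t-1)H^i(C^*)$. -/

import Mathlib

set_option synthInstance.maxHeartbeats 1000000
set_option maxHeartbeats 1000000

noncomputable section

/-! ### Hilbert basis theorem for power series -/

section Hilbert

open PowerSeries

variable {R : Type*} [CommRing R]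

/-- The ideal of `k`-th coefficients of elements of `I` of order `≥ k`. -/
def ldIdeal (I : Ideal (PowerSeries R)) (k : ℕ) : Ideal R where
  carrier := {r | ∃ f ∈ I, (∀ j < k, coeff j f = 0) ∧ coeff k f = r}
  zero_mem' := ⟨0, I.zero_mem, by simp, by simp⟩
  add_mem' := by
    rintro a b ⟨f, hf, hf1, hf2⟩ ⟨g, hg, hg1, hg2⟩
    exact ⟨f + g, I.add_mem hf hg, fun j hj => by simp [hf1 j hj, hg1 j hj],
      by simp [hf2, hg2]⟩
  smul_mem' := by
    rintro c a ⟨f, hf, hf1, hf2⟩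
    exact ⟨C c * f, I.mul_mem_left _ hf, fun j hj => by simp [coeff_C_mul, hf1 j hj],
      by simp [coeff_C_mul, hf2]⟩

lemma ldIdeal_mono (I : Ideal (PowerSeries R)) : Monotone (ldIdeal I) := by
  apply monotone_nat_of_le_succ
  rintro k a ⟨f, hf, hf1, hf2⟩
  refine ⟨X * f, I.mul_mem_left _ hf, fun j hj => ?_, by simpa [coeff_succ_X_mul] using hf2⟩
  cases j with
  | zero => simp
  | succ j => simpa [coeff_succ_X_mul] using hf1 j (by omega)

theorem PowerSeries.isNoetherianRing_of [IsNoetherianRing R] :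
    IsNoetherianRing (PowerSeries R) := by
  rw [isNoetherianRing_iff_ideal_fg]
  intro I
  obtain ⟨N, hN⟩ := (monotone_stabilizes_iff_noetherian.mpr inferInstance)
    (⟨ldIdeal I, ldIdeal_mono I⟩ : ℕ →o Ideal R)
  have hN' : ∀ m, N ≤ m → ldIdeal I N = ldIdeal I m := hN
  have hfgL : ∀ k, ∃ s : Finset R, ↑s ⊆ (ldIdeal I k : Set R) ∧
      Submodule.span R (↑s : Set R) = ldIdeal I k := by
    intro k
    obtain ⟨s, hsp⟩ := IsNoetherian.noetherian (ldIdeal I k)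
    exact ⟨s, hsp ▸ Submodule.subset_span, hsp⟩
  choose s hs hsspan using hfgL
  have hWd : ∀ (k : ℕ) (r : R), ∃ f, r ∈ ldIdeal I k →
      (f ∈ I ∧ (∀ j < k, coeff j f = 0) ∧ coeff k f = r) := by
    intro k r
    by_cases h : r ∈ ldIdeal I k
    · obtain ⟨f, hf1, hf2, hf3⟩ := h
      exact ⟨f, fun _ => ⟨hf1, hf2, hf3⟩⟩
    · exact ⟨0, fun h' => absurd h' h⟩
  choose W hWp using hWd
  set Sset : Set (PowerSeries R) := ⋃ k ∈ Set.Iic N, (W k) '' ↑(s k) with hSset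
  have hSfin : Sset.Finite :=
    Set.Finite.biUnion (Set.finite_Iic N) (fun k _ => ((s k).finite_toSet.image _))
  have hSI : Sset ⊆ I := by
    rintro f hf
    simp only [hSset, Set.mem_iUnion, Set.mem_image] at hf
    obtain ⟨k, hk, r, hr, rfl⟩ := hf
    exact (hWp k r (hs k hr)).1
  have hspanI : Ideal.span Sset ≤ I := Ideal.span_le.mpr hSI
  have hmemS : ∀ k, k ≤ N → ∀ r ∈ s k, W k r ∈ Sset := by
    intro k hk r hr
    simp only [hSset, Set.mem_iUnion, Set.mem_image]
    exact ⟨k, hk, r, hr, rfl⟩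
  have lemA : ∀ k, k ≤ N → ∀ g ∈ I, ∃ p ∈ Ideal.span Sset, ∀ j < k, coeff j (g - p) = 0 := by
    intro k
    induction k with
    | zero => exact fun _ g _ => ⟨0, Ideal.zero_mem _, by omega⟩
    | succ k ih =>
      intro hk g hg
      obtain ⟨p, hp, hp0⟩ := ih (by omega) g hg
      have hgp : g - p ∈ I := I.sub_mem hg (hspanI hp)
      have hr : coeff k (g - p) ∈ ldIdeal I k := ⟨g - p, hgp, hp0, rfl⟩
      rw [← hsspan k] at hr
      obtain ⟨cf, -, hcf⟩ := Submodule.mem_span_finset.mp hr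
      have hWa : ∀ a ∈ s k, W k a ∈ I ∧ (∀ j < k, coeff j (W k a) = 0) ∧
          coeff k (W k a) = a := fun a ha => hWp k a (hs k ha)
      refine ⟨p + ∑ a ∈ s k, C (cf a) * W k a, ?_, ?_⟩
      · exact (Ideal.span Sset).add_mem hp (Ideal.sum_mem _ fun a ha =>
          Ideal.mul_mem_left _ _ (Ideal.subset_span (hmemS k (by omega) a ha)))
      · intro j hj
        have heq : g - (p + ∑ a ∈ s k, C (cf a) * W k a)
            = (g - p) - ∑ a ∈ s k, C (cf a) * W k a := by ring
        rw [heq, map_sub, map_sum]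
        rcases Nat.lt_succ_iff_lt_or_eq.mp hj with hj' | hj'
        · rw [hp0 j hj', Finset.sum_eq_zero, sub_zero]
          intro a ha
          rw [coeff_C_mul, (hWa a ha).2.1 j hj', mul_zero]
        · subst hj'
          rw [sub_eq_zero, ← hcf]
          exact Finset.sum_congr rfl fun a ha => by
            rw [coeff_C_mul, (hWa a ha).2.2, smul_eq_mul]
  have lemB : ∀ g ∈ I, (∀ j < N, coeff j g = 0) → g ∈ Ideal.span Sset := by
    intro g hg hord
    have hrepE : ∀ r : R, ∃ cf : R → R, r ∈ ldIdeal I N → ∑ a ∈ s N, cf a * a = r := by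
      intro r
      by_cases h : r ∈ ldIdeal I N
      · rw [← hsspan N] at h
        obtain ⟨cf, -, hcf⟩ := Submodule.mem_span_finset.mp h
        exact ⟨cf, fun _ => by simpa [smul_eq_mul] using hcf⟩
      · exact ⟨0, fun h' => absurd h' h⟩
    choose rep hrep using hrepE
    have hFa : ∀ a ∈ s N, W N a ∈ I ∧ (∀ j < N, coeff j (W N a) = 0) ∧
        coeff N (W N a) = a := fun a ha => hWp N a (hs N ha)
    set seq : ℕ → PowerSeries R := fun n => Nat.rec g
      (fun n h => h - X ^ n * ∑ a ∈ s N, C (rep (coeff (N + n) h) a) * W N a) n with hseq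
    have hseq_succ : ∀ n, seq (n + 1) = seq n -
        X ^ n * ∑ a ∈ s N, C (rep (coeff (N + n) (seq n)) a) * W N a := fun n => rfl
    have inv : ∀ n, seq n ∈ I ∧ ∀ j < N + n, coeff j (seq n) = 0 := by
      intro n
      induction n with
      | zero => exact ⟨hg, fun j hj => hord j (by omega)⟩
      | succ n ih =>
        obtain ⟨h1, h2⟩ := ih
        have hrn : coeff (N + n) (seq n) ∈ ldIdeal I N := by
          have hmm : coeff (N + n) (seq n) ∈ ldIdeal I (N + n) := ⟨seq n, h1, h2, rfl⟩
          rwa [← hN' (N + n) (by omega)] at hmm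
        refine ⟨?_, ?_⟩
        · rw [hseq_succ]
          exact I.sub_mem h1 (I.mul_mem_left _ (Ideal.sum_mem _ fun a ha =>
            I.mul_mem_left _ (hFa a ha).1))
        · intro j hj
          rw [hseq_succ, map_sub, coeff_X_pow_mul']
          by_cases hnj : n ≤ j
          · rw [if_pos hnj, map_sum]
            rcases (by omega : j < N + n ∨ j = N + n) with hj' | hj'
            · have hjn : j - n < N := by omega
              rw [h2 j hj', Finset.sum_eq_zero, sub_zero]
              intro a ha
              rw [coeff_C_mul, (hFa a ha).2.1 (j - n) hjn, mul_zero]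
            · rw [hj']
              have hsum : ∑ a ∈ s N,
                  coeff (N + n - n) (C (rep (coeff (N + n) (seq n)) a) * W N a)
                  = coeff (N + n) (seq n) := by
                have hNn : N + n - n = N := by omega
                rw [hNn]
                conv_rhs => rw [← hrep _ hrn]
                exact Finset.sum_congr rfl fun a ha => by rw [coeff_C_mul, (hFa a ha).2.2]
              rw [hsum, sub_self]
          · rw [if_neg hnj, h2 j (by omega), sub_zero]
    have hpart : ∀ n, g - seq n = ∑ a ∈ s N,
        (∑ m ∈ Finset.range n, C (rep (coeff (N + m) (seq m)) a) * X ^ m) * W N a := by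
      intro n
      induction n with
      | zero =>
        show g - g = ∑ a ∈ s N, (∑ m ∈ Finset.range 0, _) * W N a
        simp
      | succ n ih =>
        have heq : g - seq (n + 1) = (g - seq n) +
            X ^ n * ∑ a ∈ s N, C (rep (coeff (N + n) (seq n)) a) * W N a := by
          rw [hseq_succ]; ring
        rw [heq, ih, Finset.mul_sum, ← Finset.sum_add_distrib]
        refine Finset.sum_congr rfl fun a _ => ?_
        rw [Finset.sum_range_succ]
        ring
    have hfinal : g = ∑ a ∈ s N,
        (PowerSeries.mk fun m => rep (coeff (N + m) (seq m)) a) * W N a := by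
      ext m
      have h2 : coeff m (seq (m + 1)) = 0 := (inv (m + 1)).2 m (by omega)
      have h3 : coeff m g = coeff m (g - seq (m + 1)) := by rw [map_sub, h2, sub_zero]
      rw [h3, hpart (m + 1), map_sum, map_sum]
      refine Finset.sum_congr rfl fun a _ => ?_
      rw [coeff_mul, coeff_mul]
      refine Finset.sum_congr rfl fun p hp => ?_
      have him : p.1 ≤ m := by
        have := Finset.HasAntidiagonal.mem_antidiagonal.mp hp
        omega
      congr 1
      rw [coeff_mk, map_sum]
      rw [Finset.sum_congr rfl fun m' _ =>
        coeff_C_mul_X_pow (rep (coeff (N + m') (seq m')) a) m' p.1]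
      rw [Finset.sum_ite_eq (Finset.range (m + 1)) p.1
        (fun m' => rep (coeff (N + m') (seq m')) a)]
      rw [if_pos (Finset.mem_range.mpr (by omega))]
    rw [hfinal]
    exact Ideal.sum_mem _ fun a ha =>
      Ideal.mul_mem_left _ _ (Ideal.subset_span (hmemS N le_rfl a ha))
  refine ⟨hSfin.toFinset, ?_⟩
  rw [Set.Finite.coe_toFinset]
  refine le_antisymm hspanI ?_
  intro g hg
  obtain ⟨p, hp, hp0⟩ := lemA N le_rfl g hg
  have hgps := lemB (g - p) (I.sub_mem hg (hspanI hp)) hp0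
  have := (Ideal.span Sset).add_mem hgps hp
  simpa using this

end Hilbert

/-! ### The setting -/

/-- Polynomials `ℂ[u,t]` with `u = X 0`, `t = X 1`. -/
abbrev Pol2 : Type := MvPolynomial (Fin 2) ℂ

/-- The ring `A_R = ℂ[u,t][[q]]/(ut - q)`. -/
abbrev ARing : Type :=
  (PowerSeries Pol2) ⧸
    (Ideal.span {(PowerSeries.C (R := Pol2)) (MvPolynomial.X 0 * MvPolynomial.X 1) - PowerSeries.X})

instance : Algebra ℂ ARing := Ideal.Quotient.algebra ℂ
instance : Module ℂ ARing := Algebra.toModule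

/-- The element `u` of `A_R`. -/
def uA : ARing := Ideal.Quotient.mk _ ((PowerSeries.C (R := Pol2)) (MvPolynomial.X 0))

/-- The element `t` of `A_R`. -/
def tA : ARing := Ideal.Quotient.mk _ ((PowerSeries.C (R := Pol2)) (MvPolynomial.X 1))

/-- The element `q` of `A_R`. -/
def qA : ARing := Ideal.Quotient.mk _ (PowerSeries.X : PowerSeries Pol2)

instance : IsNoetherianRing (PowerSeries Pol2) := PowerSeries.isNoetherianRing_of

instance : IsNoetherianRing ARing := by
  unfold ARing
  infer_instance

/-! ### The key torsion lemma -/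

/-- `t - 1` acts injectively modulo boundaries on the cycles of a module with a
connection along `t∂t - u∂u`, provided the "cohomology" `Z/B` is finitely generated. -/
lemma key_torsion {M : Type} [AddCommGroup M] [Module ARing M]
    (DA : Derivation ℂ ARing ARing) (hDt : DA tA = tA)
    (D : M →+ M) (hD : ∀ (a : ARing) (x : M), D (a • x) = DA a • x + a • D x)
    (Z B : Submodule ARing M) (hBZ : B ≤ Z)
    (hDZ : ∀ x ∈ Z, D x ∈ Z) (hDB : ∀ x ∈ B, D x ∈ B)
    (s : Finset M) (hsZ : ↑s ⊆ (Z : Set M)) (hZs : Z ≤ Submodule.span ARing ↑s ⊔ B)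
    (c : M) (hcZ : c ∈ Z) (hc : (tA - 1) • c ∈ B) : c ∈ B := by
  classical
  have hDσ : DA (1 - tA) = -tA := by
    rw [map_sub, hDt, Derivation.map_one_eq_zero, zero_sub]
  have hcB : (1 - tA) • c ∈ B := by
    have e : (1 - tA) • c = (-1 : ARing) • ((tA - 1) • c) := by letI : Algebra ℕ ARing := Semiring.toNatAlgebra; module
    rw [e]; exact B.smul_mem _ hc
  -- The inductive claim coming from the connection.
  have claim : ∀ n : ℕ, (((n.factorial : ℕ) : ARing) • c - (1 - tA) ^ n • (D^[n] c) ∈ B)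
      ∧ ((1 - tA) ^ (n + 1) • (D^[n] c) ∈ B) ∧ D^[n] c ∈ Z := by
    intro n
    induction n with
    | zero =>
      refine ⟨?_, by simpa using hcB, hcZ⟩
      have e0 : ((Nat.factorial 0 : ℕ) : ARing) • c - (1 - tA) ^ 0 • (D^[0] c) = 0 := by
        simp
      rw [e0]
      exact B.zero_mem
    | succ n ih =>
      obtain ⟨ih1, ih2, ihZ⟩ := ih
      set m := D^[n] c with hm
      have hit : D^[n + 1] c = D m := Function.iterate_succ_apply' D n c
      have hAn : DA ((1 - tA) ^ (n + 1)) = -(((n : ARing) + 1) * ((1 - tA) ^ n * tA)) := by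
        rw [Derivation.leibniz_pow, hDσ]
        have hn1 : n + 1 - 1 = n := rfl
        rw [hn1, smul_eq_mul, nsmul_eq_mul]
        push_cast
        ring
      have hDm : DA ((1 - tA) ^ (n + 1)) • m + (1 - tA) ^ (n + 1) • D m ∈ B := by
        have h := hDB _ ih2; rwa [hD] at h
      rw [hAn] at hDm
      refine ⟨?_, ?_, hit ▸ hDZ _ ihZ⟩
      · rw [hit]
        have hfac : (((n + 1).factorial : ℕ) : ARing)
            = ((n : ARing) + 1) * ((n.factorial : ℕ) : ARing) := by
          rw [Nat.factorial_succ]; push_cast; ring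
        have e : (((n + 1).factorial : ℕ) : ARing) • c - (1 - tA) ^ (n + 1) • D m
            = (-1 : ARing) • ((-(((n : ARing) + 1) * ((1 - tA) ^ n * tA))) • m
                + (1 - tA) ^ (n + 1) • D m)
              + ((n : ARing) + 1) • ((((n.factorial : ℕ) : ARing)) • c - (1 - tA) ^ n • m)
              + ((n : ARing) + 1) • ((1 - tA) ^ (n + 1) • m) := by
          rw [hfac]; letI : Algebra ℕ ARing := Semiring.toNatAlgebra; letI : Algebra ℤ ARing := Ring.toIntAlgebra ARing; module
        rw [e]
        exact B.add_mem (B.add_mem (B.smul_mem _ hDm) (B.smul_mem _ ih1)) (B.smul_mem _ ih2)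
      · rw [hit]
        have e : (1 - tA) ^ (n + 1 + 1) • D m
            = (1 - tA) • ((-(((n : ARing) + 1) * ((1 - tA) ^ n * tA))) • m
                + (1 - tA) ^ (n + 1) • D m)
              + (((n : ARing) + 1) * tA) • ((1 - tA) ^ (n + 1) • m) := by
          letI : Algebra ℕ ARing := Semiring.toNatAlgebra; module
        rw [e]
        exact B.add_mem (B.smul_mem _ hDm) (B.smul_mem _ ih2)
  -- Noetherian stabilization.
  set φ : M →ₗ[ARing] M ⧸ B := B.mkQ with hφ
  set H' : Submodule ARing (M ⧸ B) := Z.map φ with hH'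
  have hH'fg : H'.FG := by
    refine ⟨s.image (fun x : M => φ x), le_antisymm ?_ ?_⟩
    · simp only [Finset.coe_image]
      rw [Submodule.span_le]
      rintro y ⟨x, hx, rfl⟩
      exact ⟨x, hsZ hx, rfl⟩
    · rintro y ⟨x, hxZ, rfl⟩
      obtain ⟨y₁, hy₁, z, hz, rfl⟩ := Submodule.mem_sup.mp (hZs hxZ)
      have hz0 : φ z = 0 := by
        simpa [hφ, Submodule.Quotient.mk_eq_zero] using hz
      rw [map_add, hz0, add_zero]
      simp only [Finset.coe_image]
      have hmem : φ y₁ ∈ Submodule.map φ (Submodule.span ARing (↑s : Set M)) :=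
        Submodule.mem_map_of_mem hy₁
      rwa [Submodule.map_span] at hmem
  haveI : IsNoetherian ARing ↥H' := isNoetherian_of_fg_of_noetherian H' hH'fg
  set f : ℕ → Submodule ARing M := fun n =>
    Z ⊓ Submodule.comap (LinearMap.lsmul ARing M ((1 - tA) ^ n)) B with hf
  have hfmono : Monotone f := by
    apply monotone_nat_of_le_succ
    intro n x hx
    obtain ⟨hx1, hx2⟩ := hx
    refine ⟨hx1, ?_⟩
    have hx2' : ((1 - tA) ^ n) • x ∈ B := hx2
    show ((1 - tA) ^ (n + 1)) • x ∈ B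
    rw [pow_succ', mul_smul]
    exact B.smul_mem _ hx2'
  have hBf : ∀ n, B ≤ f n := by
    intro n
    intro x hx
    exact ⟨hBZ hx, B.smul_mem _ hx⟩
  have hfZ : ∀ n, f n ≤ Z := fun n => inf_le_left
  set g : ℕ →o Submodule ARing ↥H' :=
    ⟨fun n => ((f n).map φ).comap H'.subtype,
      fun a b hab => Submodule.comap_mono (Submodule.map_mono (hfmono hab))⟩ with hg
  obtain ⟨K, hK⟩ := (monotone_stabilizes_iff_noetherian.mpr ‹_›) g
  have hfK : f (K + 1) ≤ f K := by
    intro x hx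
    have hxZ : x ∈ Z := hfZ _ hx
    have hφx : φ x ∈ H' := ⟨x, hxZ, rfl⟩
    have h1 : (⟨φ x, hφx⟩ : ↥H') ∈ g (K + 1) := by
      show φ x ∈ (f (K + 1)).map φ
      exact Submodule.mem_map_of_mem hx
    rw [← hK (K + 1) (by omega)] at h1
    have h2 : φ x ∈ (f K).map φ := h1
    obtain ⟨x', hx', hx'e⟩ := h2
    have hxx' : x - x' ∈ B := by
      rw [← Submodule.Quotient.eq]
      exact hx'e.symm
    have hxe : x = x' + (x - x') := by abel
    rw [hxe]
    exact (f K).add_mem hx' (hBf K hxx')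
  -- Conclude.
  have hDK : D^[K] c ∈ f (K + 1) := ⟨(claim K).2.2, (claim K).2.1⟩
  have hDK' : (1 - tA) ^ K • (D^[K] c) ∈ B := (hfK hDK).2
  have hKc : ((K.factorial : ℕ) : ARing) • c ∈ B := by
    have e : ((K.factorial : ℕ) : ARing) • c
        = (((K.factorial : ℕ) : ARing) • c - (1 - tA) ^ K • (D^[K] c))
          + (1 - tA) ^ K • (D^[K] c) := by abel
    rw [e]
    exact B.add_mem (claim K).1 hDK'
  have hunit : IsUnit ((K.factorial : ℕ) : ARing) := by
    have h1 : IsUnit ((K.factorial : ℂ)) :=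
      isUnit_iff_ne_zero.mpr (by exact_mod_cast K.factorial_ne_zero)
    have h2 := h1.map (algebraMap ℂ ARing)
    rwa [map_natCast] at h2
  obtain ⟨v, hv⟩ := hunit
  have hce : c = (↑v⁻¹ : ARing) • (((K.factorial : ℕ) : ARing) • c) := by
    rw [smul_smul, ← hv, Units.inv_mul, one_smul]
  rw [hce]
  exact B.smul_mem _ hKc

/-- Let `C*` be a cochain complex of `q`-adically complete `A_R`-modules with finitely
generated cohomology in each degree, such that `t - 1` acts injectively on each `Cⁱ`, and
carrying a homotopy connection (a pre-connection along `t∂t - u∂u` commuting with the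
differential).  Then for each `i`, the natural map
`H^i(C*)/(t-1)H^i(C*) → H^i(C*/(t-1)C*)` is an isomorphism (stated elementwise as
injectivity and surjectivity). -/
theorem stmt13 (DA : Derivation ℂ ARing ARing) (hDu : DA uA = -uA) (hDt : DA tA = tA)
    (C : ℤ → Type) [∀ i, AddCommGroup (C i)] [∀ i, Module ARing (C i)]
    (d : ∀ i, C i →ₗ[ARing] C (i + 1))
    (hd : ∀ i (x : C i), d (i + 1) (d i x) = 0)
    (hcomp : ∀ i, IsAdicComplete (Ideal.span {qA}) (C i))
    (hfg : ∀ i : ℤ, ∃ s : Finset (C (i + 1)),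
        (∀ x ∈ s, d (i + 1) x = 0) ∧
        ∀ x : C (i + 1), d (i + 1) x = 0 →
          x ∈ Submodule.span ARing (s : Set (C (i + 1))) ⊔ LinearMap.range (d i))
    (hinj : ∀ i (x : C i), (tA - 1) • x = 0 → x = 0)
    (Dc : ∀ i, C i →+ C i)
    (hDc : ∀ i (a : ARing) (x : C i), Dc i (a • x) = DA a • x + a • Dc i x)
    (hcomm : ∀ i (x : C i), Dc (i + 1) (d i x) = d i (Dc i x)) :
    ∀ i : ℤ,
      (∀ x : C (i + 1), d (i + 1) x = 0 → (∃ c w, x = (tA - 1) • c + d i w) →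
          ∃ y w', d (i + 1) y = 0 ∧ x = (tA - 1) • y + d i w') ∧
      (∀ x : C (i + 1), (∃ c, d (i + 1) x = (tA - 1) • c) →
          ∃ y, d (i + 1) y = 0 ∧ ∃ c' w, x - y = (tA - 1) • c' + d i w) := by
  intro i
  constructor
  · rintro x hx ⟨c, w, rfl⟩
    refine ⟨c, w, ?_, rfl⟩
    apply hinj _ (d (i + 1) c)
    have he : (tA - 1) • d (i + 1) c = d (i + 1) ((tA - 1) • c + d i w) := by
      rw [map_add, map_smul, hd i w, add_zero]
    rw [he, hx]
  · rintro x ⟨c, hc⟩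
    have hdc : d (i + 1 + 1) c = 0 := by
      apply hinj _ (d (i + 1 + 1) c)
      have he : (tA - 1) • d (i + 1 + 1) c = d (i + 1 + 1) ((tA - 1) • c) :=
        (map_smul _ _ _).symm
      rw [he, ← hc, hd]
    obtain ⟨s, hs1, hs2⟩ := hfg (i + 1)
    have hcB : c ∈ LinearMap.range (d (i + 1)) := by
      refine key_torsion DA hDt (Dc (i + 1 + 1)) (hDc (i + 1 + 1))
        (LinearMap.ker (d (i + 1 + 1))) (LinearMap.range (d (i + 1)))
        ?_ ?_ ?_ s ?_ ?_ c (LinearMap.mem_ker.mpr hdc) ⟨x, hc⟩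
      · rintro y ⟨w, rfl⟩
        exact LinearMap.mem_ker.mpr (hd (i + 1) w)
      · intro y hy
        rw [LinearMap.mem_ker] at hy ⊢
        rw [← hcomm (i + 1 + 1) y, hy, map_zero]
      · rintro y ⟨w, rfl⟩
        exact ⟨Dc (i + 1) w, (hcomm (i + 1) w).symm⟩
      · intro y hy
        exact LinearMap.mem_ker.mpr (hs1 y hy)
      · intro y hy
        exact hs2 y (LinearMap.mem_ker.mp hy)
    obtain ⟨c₀, hc₀⟩ := hcB
    refine ⟨x - (tA - 1) • c₀, ?_, c₀, 0, ?_⟩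
    · rw [map_sub, map_smul, hc₀, hc, sub_self]
    · rw [map_zero, add_zero]
      abel

end
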